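/- Second conditional-entropy estimate: let κ = (κ_1,…,κ_L) with L ≥ 2, and suppose that for each ℓ ∈ [L], σ_ℓ ≥ 0 is a valid log-Sobolev constant for the two-color multislice with parameter (κ_ℓ, n−κ_ℓ). Then for every f : Ω_κ → [0,∞), Σ_{ℓ=1}^{L} (1 − κ_ℓ/n)·Ent_κ(E[f | ξ_ℓ]) ≤ max_{ℓ∈[L]} { 2(1 − κ_ℓ/n)·σ_ℓ } · 𝔈_κ(√f, √f), where E[f | ξ_ℓ] denotes the function ω ↦ (average of f over {ω' ∈ Ω_κ : ξ_ℓ(ω') = ξ_ℓ(ω)}). -/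

import Mathlib

open Finset

namespace Multislice

/-- The multislice `Ω_κ`: sequences of length `n` with values in `Fin L`
in which color `ℓ` appears exactly `κ ℓ` times. -/
def slice (L n : ℕ) (κ : Fin L → ℕ) : Finset (Fin n → Fin L) :=
  Finset.univ.filter fun ω => ∀ ℓ, (Finset.univ.filter fun i => ω i = ℓ).card = κ ℓ

/-- Average of `f` with respect to the uniform distribution on `Ω`. -/
noncomputable def expect {L n : ℕ} (Ω : Finset (Fin n → Fin L))
    (f : (Fin n → Fin L) → ℝ) : ℝ :=
  (∑ ω ∈ Ω, f ω) / Ω.card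

/-- Discrete gradient `(∇^{ij} f)(ω) = f(ω^{ij}) - f(ω)`. -/
noncomputable def grad {L n : ℕ} (i j : Fin n) (f : (Fin n → Fin L) → ℝ)
    (ω : Fin n → Fin L) : ℝ :=
  f (ω ∘ Equiv.swap i j) - f ω

/-- The Dirichlet form `𝔈_κ(f,g) = (1/(2n)) Σ_{i<j} E[(∇^{ij}f)(∇^{ij}g)]`. -/
noncomputable def dirichlet {L n : ℕ} (Ω : Finset (Fin n → Fin L))
    (f g : (Fin n → Fin L) → ℝ) : ℝ :=
  (1 / (2 * (n : ℝ))) *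
    ∑ p ∈ Finset.univ.filter (fun p : Fin n × Fin n => p.1 < p.2),
      expect Ω fun ω => grad p.1 p.2 f ω * grad p.1 p.2 g ω

/-- The weighted Dirichlet form `𝔈^G_κ(f,g) = (1/2) Σ_{i<j} G_{ij} E[(∇^{ij}f)(∇^{ij}g)]`. -/
noncomputable def wDirichlet {L n : ℕ} (G : Fin n → Fin n → ℝ)
    (Ω : Finset (Fin n → Fin L)) (f g : (Fin n → Fin L) → ℝ) : ℝ :=
  (1 / 2) *
    ∑ p ∈ Finset.univ.filter (fun p : Fin n × Fin n => p.1 < p.2),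
      G p.1 p.2 * expect Ω fun ω => grad p.1 p.2 f ω * grad p.1 p.2 g ω

/-- Entropy `Ent(f) = E[f log f] - E[f] log E[f]` (note `Real.log 0 = 0`). -/
noncomputable def entropy {L n : ℕ} (Ω : Finset (Fin n → Fin L))
    (f : (Fin n → Fin L) → ℝ) : ℝ :=
  expect Ω (fun ω => f ω * Real.log (f ω)) - expect Ω f * Real.log (expect Ω f)

/-- Variance `Var(f) = E[f²] - (E[f])²`. -/
noncomputable def variance {L n : ℕ} (Ω : Finset (Fin n → Fin L))
    (f : (Fin n → Fin L) → ℝ) : ℝ :=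
  expect Ω (fun ω => f ω ^ 2) - (expect Ω f) ^ 2

/-- The edge boundary `∂A` of `A ⊆ Ω`: edges (recorded as pairs with first endpoint
in `A` and second endpoint in `Ω \ A`) between `A` and its complement, where two
states are adjacent when they differ in exactly two coordinates. -/
def edgeBoundary {L n : ℕ} (Ω A : Finset (Fin n → Fin L)) :
    Finset ((Fin n → Fin L) × (Fin n → Fin L)) :=
  (A ×ˢ (Ω \ A)).filter fun p => (Finset.univ.filter fun i => p.1 i ≠ p.2 i).card = 2

/-- The `ℓ`-colored region `ξ_ℓ(ω) = {i : ω i = ℓ}`. -/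
def xi {L n : ℕ} (ℓ : Fin L) (ω : Fin n → Fin L) : Finset (Fin n) :=
  Finset.univ.filter fun i => ω i = ℓ

/-- The parameter `κ^{∖ℓ}` obtained from `κ` by removing the `ℓ`-th entry. -/
def removeIdx {L : ℕ} (κ : Fin L → ℕ) (ℓ : Fin L) (m : Fin (L - 1)) : ℕ :=
  if (m : ℕ) < (ℓ : ℕ) then κ ⟨m, by have := m.isLt; omega⟩
  else κ ⟨(m : ℕ) + 1, by have := m.isLt; omega⟩

variable {L n : ℕ}

lemma mem_slice {κ : Fin L → ℕ} {ω : Fin n → Fin L} :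
    ω ∈ slice L n κ ↔ ∀ ℓ, (Finset.univ.filter fun i => ω i = ℓ).card = κ ℓ := by
  simp [slice]

lemma card_filter_comp {m : ℕ} (e : Fin m ≃ Fin n) (p : Fin n → Prop) [DecidablePred p] :
    ((Finset.univ : Finset (Fin m)).filter fun i => p (e i)).card
      = (Finset.univ.filter p).card := by
  apply Finset.card_bij (fun i _ => e i)
  · intro a ha; simp only [mem_filter, mem_univ, true_and] at ha ⊢; exact ha
  · intro a _ b _ h; exact e.injective h
  · intro b hb
    refine ⟨e.symm b, ?_, by simp⟩
    simp only [mem_filter, mem_univ, true_and, Equiv.apply_symm_apply] at hb ⊢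
    exact hb

lemma slice_comp {κ : Fin L → ℕ} {ω : Fin n → Fin L} (hω : ω ∈ slice L n κ)
    (e : Fin n ≃ Fin n) : ω ∘ e ∈ slice L n κ := by
  rw [mem_slice] at hω ⊢
  intro m
  rw [show (Finset.univ.filter fun i => (ω ∘ e) i = m)
      = (Finset.univ.filter fun i => ω (e i) = m) from rfl,
    card_filter_comp e (fun i => ω i = m)]
  exact hω m

lemma slice_nonempty : ∀ (L : ℕ) (κ : Fin L → ℕ) (n : ℕ), n = ∑ ℓ, κ ℓ →
    (slice L n κ).Nonempty := by
  intro L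
  induction L with
  | zero =>
    intro κ n hn
    simp only [Finset.univ_eq_empty, Finset.sum_empty] at hn
    subst hn
    exact ⟨fun i => i.elim0, mem_slice.mpr fun ℓ => ℓ.elim0⟩
  | succ L ih =>
    intro κ n hn
    set n' := ∑ m : Fin L, κ m.succ with hn'
    obtain ⟨ω', hω'⟩ := ih (fun m => κ m.succ) n' rfl
    have hsum : n = κ 0 + n' := by rw [hn, Fin.sum_univ_succ]
    set base : Fin (κ 0 + n') → Fin (L + 1) :=
      Fin.append (fun _ => 0) (fun i => (ω' i).succ) with hbase
    have hbmem : base ∈ slice (L + 1) (κ 0 + n') κ := by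
      rw [mem_slice]
      intro ℓ
      rw [Finset.card_filter]
      rw [Fin.sum_univ_add]
      induction ℓ using Fin.cases with
      | zero =>
        have h1 : ∀ i : Fin (κ 0), base (Fin.castAdd n' i) = 0 := fun i => by
          simp [hbase, Fin.append_left]
        have h2 : ∀ i : Fin n', ¬ (base (Fin.natAdd (κ 0) i) = 0) := fun i => by
          simp [hbase, Fin.append_right, Fin.succ_ne_zero]
        simp only [h1, if_pos rfl]
        rw [Finset.sum_congr rfl (fun i _ => if_neg (h2 i))]
        simp
      | succ m =>
        have h1 : ∀ i : Fin (κ 0), ¬ (base (Fin.castAdd n' i) = m.succ) := fun i => by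
          simp [hbase, Fin.append_left, (Fin.succ_ne_zero m).symm]
        have h2 : ∀ i : Fin n', (base (Fin.natAdd (κ 0) i) = m.succ) ↔ ω' i = m := fun i => by
          simp [hbase, Fin.append_right, Fin.succ_inj]
        rw [Finset.sum_congr rfl (fun i _ => if_neg (h1 i))]
        have : (∑ i : Fin n', if base (Fin.natAdd (κ 0) i) = m.succ then 1 else 0)
            = ∑ i : Fin n', if ω' i = m then 1 else 0 := by
          refine Finset.sum_congr rfl fun i _ => ?_
          rw [if_congr (h2 i) rfl rfl]
        rw [this, ← Finset.card_filter]
        simpa using mem_slice.mp hω' m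
    refine ⟨base ∘ (finCongr hsum), ?_⟩
    rw [mem_slice] at hbmem ⊢
    intro m
    rw [show (Finset.univ.filter fun i => (base ∘ finCongr hsum) i = m)
        = (Finset.univ.filter fun i => base (finCongr hsum i) = m) from rfl,
      card_filter_comp (finCongr hsum) (fun i => base i = m)]
    exact hbmem m


/-- Two-coloring projection: color `ℓ` ↦ 0, everything else ↦ 1. -/
def proj (ℓ : Fin L) (ω : Fin n → Fin L) : Fin n → Fin 2 :=
  fun i => if ω i = ℓ then 0 else 1

lemma proj_comp (ℓ : Fin L) (ω : Fin n → Fin L) (e : Fin n → Fin n) :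
    proj ℓ (ω ∘ e) = proj ℓ ω ∘ e := rfl

lemma proj_mem {κ : Fin L → ℕ} {ω : Fin n → Fin L} (hω : ω ∈ slice L n κ) (ℓ : Fin L) :
    proj ℓ ω ∈ slice 2 n ![κ ℓ, n - κ ℓ] := by
  have h0 : (Finset.univ.filter fun i => proj ℓ ω i = 0).card = κ ℓ := by
    rw [← mem_slice.mp hω ℓ]
    congr 1
    apply Finset.filter_congr
    intro i _
    simp only [proj]
    by_cases h : ω i = ℓ <;> simp [h]
  rw [mem_slice]
  intro m
  by_cases hm : m = 0
  · subst hm; simpa using h0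
  · rw [Fin.eq_one_of_ne_zero _ hm]
    have hcompl : (Finset.univ.filter fun i => proj ℓ ω i = 1)
        = Finset.univ \ (Finset.univ.filter fun i => proj ℓ ω i = 0) := by
      rw [← Finset.filter_not]
      apply Finset.filter_congr
      intro i _
      constructor
      · intro h h'; rw [h'] at h; exact absurd h (by decide)
      · intro h; exact Fin.eq_one_of_ne_zero _ h
    rw [hcompl, Finset.card_sdiff_of_subset (Finset.filter_subset _ _), h0]
    simp

lemma xi_eq_iff_proj_eq (ℓ : Fin L) (ω' ω : Fin n → Fin L) :
    xi ℓ ω' = xi ℓ ω ↔ proj ℓ ω' = proj ℓ ω := by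
  rw [xi, xi, Finset.ext_iff, funext_iff]
  constructor
  · intro h i
    have := h i
    simp only [mem_filter, mem_univ, true_and] at this
    simp only [proj]
    by_cases h1 : ω' i = ℓ
    · rw [if_pos h1, if_pos (this.mp h1)]
    · rw [if_neg h1, if_neg (fun h2 => h1 (this.mpr h2))]
  · intro h i
    have := h i
    simp only [proj] at this
    simp only [mem_filter, mem_univ, true_and]
    by_cases h1 : ω' i = ℓ <;> by_cases h2 : ω i = ℓ
    · simp [h1, h2]
    · rw [if_pos h1, if_neg h2] at this
      exact absurd this (by decide)
    · rw [if_neg h1, if_pos h2] at this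
      exact absurd this (by decide)
    · simp [h1, h2]

/-- All fibers of `proj ℓ` over points of the two-color slice have the same size. -/
lemma fiber_card_eq {κ : Fin L → ℕ} (ℓ : Fin L) {τ τ' : Fin n → Fin 2}
    (hτ : τ ∈ slice 2 n ![κ ℓ, n - κ ℓ]) (hτ' : τ' ∈ slice 2 n ![κ ℓ, n - κ ℓ]) :
    ((slice L n κ).filter fun ω => proj ℓ ω = τ).card
      = ((slice L n κ).filter fun ω => proj ℓ ω = τ').card := by
  classical
  have hcard : Fintype.card {i // τ' i = 0} = Fintype.card {i // τ i = 0} := by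
    rw [Fintype.card_subtype, Fintype.card_subtype]
    have h1 := mem_slice.mp hτ 0
    have h2 := mem_slice.mp hτ' 0
    simp only [Matrix.cons_val_zero] at h1 h2
    rw [h1, h2]
  let e0 : {i // τ' i = 0} ≃ {i // τ i = 0} := Fintype.equivOfCardEq hcard
  let σe : Equiv.Perm (Fin n) := e0.extendSubtype
  have key : ∀ i, τ (σe i) = τ' i := by
    intro i
    by_cases h : τ' i = 0
    · rw [h]; exact e0.extendSubtype_mem i h
    · rw [Fin.eq_one_of_ne_zero _ h]
      exact Fin.eq_one_of_ne_zero _ (e0.extendSubtype_not_mem i h)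
  apply Finset.card_bij' (fun ω _ => ω ∘ σe) (fun ω _ => ω ∘ σe.symm)
  · intro ω hω
    simp only [mem_filter] at hω ⊢
    refine ⟨slice_comp hω.1 σe, ?_⟩
    funext i
    rw [proj_comp]
    simp only [Function.comp_apply]
    rw [hω.2]
    exact key i
  · intro ω hω
    simp only [mem_filter] at hω ⊢
    refine ⟨slice_comp hω.1 σe.symm, ?_⟩
    funext i
    rw [proj_comp]
    simp only [Function.comp_apply]
    rw [hω.2, ← key (σe.symm i), Equiv.apply_symm_apply]
  · intro ω _; funext i; simp
  · intro ω _; funext i; simp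


lemma expect_nonneg {Ω : Finset (Fin n → Fin L)} {f : (Fin n → Fin L) → ℝ}
    (hf : ∀ ω, 0 ≤ f ω) : 0 ≤ expect Ω f :=
  div_nonneg (Finset.sum_nonneg fun ω _ => hf ω) (Nat.cast_nonneg _)

section Transfer

variable {κ : Fin L → ℕ} {ℓ : Fin L}

lemma exists_fiber_card (hΩ : (slice L n κ).Nonempty) (ℓ : Fin L) :
    ∃ c : ℕ, 0 < c ∧ ∀ τ ∈ slice 2 n ![κ ℓ, n - κ ℓ],
      ((slice L n κ).filter fun ω => proj ℓ ω = τ).card = c := by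
  obtain ⟨ω₀, h0⟩ := hΩ
  refine ⟨((slice L n κ).filter fun ω => proj ℓ ω = proj ℓ ω₀).card, ?_, ?_⟩
  · exact Finset.card_pos.mpr ⟨ω₀, Finset.mem_filter.mpr ⟨h0, rfl⟩⟩
  · intro τ hτ
    exact fiber_card_eq ℓ hτ (proj_mem h0 ℓ)

lemma card_slice_eq {c : ℕ}
    (hc : ∀ τ ∈ slice 2 n ![κ ℓ, n - κ ℓ],
      ((slice L n κ).filter fun ω => proj ℓ ω = τ).card = c) :
    (slice L n κ).card = (slice 2 n ![κ ℓ, n - κ ℓ]).card * c := by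
  rw [Finset.card_eq_sum_card_fiberwise (fun ω hω => proj_mem hω ℓ)]
  rw [Finset.sum_congr rfl hc, Finset.sum_const, smul_eq_mul]

lemma sum_proj {c : ℕ}
    (hc : ∀ τ ∈ slice 2 n ![κ ℓ, n - κ ℓ],
      ((slice L n κ).filter fun ω => proj ℓ ω = τ).card = c)
    (F : (Fin n → Fin 2) → ℝ) :
    ∑ ω ∈ slice L n κ, F (proj ℓ ω)
      = (c : ℝ) * ∑ τ ∈ slice 2 n ![κ ℓ, n - κ ℓ], F τ := by
  rw [← Finset.sum_fiberwise_of_maps_to (fun ω hω => proj_mem hω ℓ)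
      (fun ω => F (proj ℓ ω)), Finset.mul_sum]
  refine Finset.sum_congr rfl fun τ hτ => ?_
  have : ∀ ω ∈ (slice L n κ).filter fun ω => proj ℓ ω = τ, F (proj ℓ ω) = F τ := by
    intro ω hω
    rw [(Finset.mem_filter.mp hω).2]
  rw [Finset.sum_congr rfl this, Finset.sum_const, hc τ hτ, nsmul_eq_mul]

lemma expect_proj (hΩ : (slice L n κ).Nonempty) {c : ℕ} (hcpos : 0 < c)
    (hc : ∀ τ ∈ slice 2 n ![κ ℓ, n - κ ℓ],
      ((slice L n κ).filter fun ω => proj ℓ ω = τ).card = c)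
    (F : (Fin n → Fin 2) → ℝ) :
    expect (slice L n κ) (fun ω => F (proj ℓ ω))
      = expect (slice 2 n ![κ ℓ, n - κ ℓ]) F := by
  have hΩ₂ : (slice 2 n ![κ ℓ, n - κ ℓ]).Nonempty :=
    ⟨proj ℓ hΩ.choose, proj_mem hΩ.choose_spec ℓ⟩
  have hD : (0 : ℝ) < (slice 2 n ![κ ℓ, n - κ ℓ]).card := by
    exact_mod_cast Finset.card_pos.mpr hΩ₂
  have hc' : (0 : ℝ) < (c : ℝ) := by exact_mod_cast hcpos
  rw [expect, expect, sum_proj hc F, card_slice_eq hc]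
  push_cast
  field_simp

lemma entropy_proj (hΩ : (slice L n κ).Nonempty) {c : ℕ} (hcpos : 0 < c)
    (hc : ∀ τ ∈ slice 2 n ![κ ℓ, n - κ ℓ],
      ((slice L n κ).filter fun ω => proj ℓ ω = τ).card = c)
    (F : (Fin n → Fin 2) → ℝ) :
    entropy (slice L n κ) (fun ω => F (proj ℓ ω))
      = entropy (slice 2 n ![κ ℓ, n - κ ℓ]) F := by
  rw [entropy, entropy,
    expect_proj hΩ hcpos hc (fun τ => F τ * Real.log (F τ)),
    expect_proj hΩ hcpos hc F]

end Transfer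


lemma swap_comp_self {α : Type*} (i j : Fin n) (ω : Fin n → α) :
    (ω ∘ ⇑(Equiv.swap i j)) ∘ ⇑(Equiv.swap i j) = ω := by
  funext x
  simp [Function.comp, Equiv.swap_apply_self]

section Pair

variable {κ : Fin L → ℕ} {ℓ : Fin L}

lemma pair_bound (hΩ : (slice L n κ).Nonempty) {c : ℕ} (hcpos : 0 < c)
    (hc : ∀ τ ∈ slice 2 n ![κ ℓ, n - κ ℓ],
      ((slice L n κ).filter fun ω => proj ℓ ω = τ).card = c)
    (f : (Fin n → Fin L) → ℝ) (hf : ∀ ω, 0 ≤ f ω) (i j : Fin n) :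
    expect (slice 2 n ![κ ℓ, n - κ ℓ])
      (fun τ => grad i j (fun τ' => Real.sqrt
          (expect ((slice L n κ).filter fun ω => proj ℓ ω = τ') f)) τ *
        grad i j (fun τ' => Real.sqrt
          (expect ((slice L n κ).filter fun ω => proj ℓ ω = τ') f)) τ)
      ≤ expect (slice L n κ)
        (fun ω => (if (ω i = ℓ ↔ ω j = ℓ) then (0:ℝ) else 1) *
          (grad i j (fun ω' => Real.sqrt (f ω')) ω *
           grad i j (fun ω' => Real.sqrt (f ω')) ω)) := by
  classical
  set Ω := slice L n κ with hΩdef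
  set Ω₂ := slice 2 n ![κ ℓ, n - κ ℓ] with hΩ₂def
  set g : (Fin n → Fin 2) → ℝ := fun τ => expect (Ω.filter fun ω => proj ℓ ω = τ) f with hg
  set X : (Fin n → Fin 2) → ℝ := fun τ =>
    grad i j (fun τ' => Real.sqrt (g τ')) τ * grad i j (fun τ' => Real.sqrt (g τ')) τ with hX
  set Y : (Fin n → Fin L) → ℝ := fun ω =>
    (if (ω i = ℓ ↔ ω j = ℓ) then (0:ℝ) else 1) *
      (grad i j (fun ω' => Real.sqrt (f ω')) ω * grad i j (fun ω' => Real.sqrt (f ω')) ω)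
    with hY
  have hcR : (0:ℝ) < (c:ℝ) := by exact_mod_cast hcpos
  -- key fiberwise bound
  have key : ∀ τ ∈ Ω₂, (c:ℝ) * X τ ≤ ∑ ω ∈ Ω.filter fun ω => proj ℓ ω = τ, Y ω := by
    intro τ hτ
    set Fib := Ω.filter fun ω => proj ℓ ω = τ with hFib
    have hFib_card : Fib.card = c := hc τ hτ
    have hτs : τ ∘ ⇑(Equiv.swap i j) ∈ Ω₂ := slice_comp hτ (Equiv.swap i j)
    have hchimem : ∀ ω ∈ Fib, (ω i = ℓ ↔ τ i = 0) ∧ (ω j = ℓ ↔ τ j = 0) := by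
      intro ω hω
      have hp := (Finset.mem_filter.mp hω).2
      constructor
      · rw [← hp]
        by_cases h1 : ω i = ℓ <;> simp [proj, h1]
      · rw [← hp]
        by_cases h1 : ω j = ℓ <;> simp [proj, h1]
    by_cases hij : τ i = τ j
    · -- swap fixes τ, both sides vanish
      have hts : τ ∘ ⇑(Equiv.swap i j) = τ := by
        funext x
        by_cases hxi : x = i
        · subst hxi; simp only [Function.comp_apply, Equiv.swap_apply_left]; exact hij.symm
        by_cases hxj : x = j
        · subst hxj; simp only [Function.comp_apply, Equiv.swap_apply_right]; exact hij
        · simp only [Function.comp_apply, Equiv.swap_apply_of_ne_of_ne hxi hxj]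
      have hXτ : X τ = 0 := by
        have hgr : grad i j (fun τ' => Real.sqrt (g τ')) τ = 0 := by
          simp only [grad, hts, sub_self]
        simp only [hX, hgr, mul_zero]
      have hYzero : ∀ ω ∈ Fib, Y ω = 0 := by
        intro ω hω
        obtain ⟨h1, h2⟩ := hchimem ω hω
        have : ω i = ℓ ↔ ω j = ℓ := by rw [h1, h2, hij]
        simp only [hY, if_pos this, zero_mul]
      rw [Finset.sum_congr rfl hYzero, hXτ]
      simp
    · -- the interesting case
      set A := ∑ ω ∈ Fib, f (ω ∘ ⇑(Equiv.swap i j)) with hA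
      set B := ∑ ω ∈ Fib, f ω with hB
      have hA0 : 0 ≤ A := Finset.sum_nonneg fun ω _ => hf _
      have hB0 : 0 ≤ B := Finset.sum_nonneg fun ω _ => hf _
      have hswap_sum : ∀ F : (Fin n → Fin L) → ℝ,
          ∑ ω ∈ Ω.filter (fun ω => proj ℓ ω = τ ∘ ⇑(Equiv.swap i j)), F ω
            = ∑ ω ∈ Fib, F (ω ∘ ⇑(Equiv.swap i j)) := by
        intro F
        apply Finset.sum_nbij' (i := fun ω => ω ∘ ⇑(Equiv.swap i j))
          (j := fun ω => ω ∘ ⇑(Equiv.swap i j))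
        · intro ω hω
          simp only [hFib, Finset.mem_filter] at hω ⊢
          refine ⟨slice_comp hω.1 (Equiv.swap i j), ?_⟩
          rw [proj_comp, hω.2, swap_comp_self]
        · intro ω hω
          simp only [hFib, Finset.mem_filter] at hω ⊢
          refine ⟨slice_comp hω.1 (Equiv.swap i j), ?_⟩
          rw [proj_comp, hω.2]
        · intro ω _; exact swap_comp_self i j ω
        · intro ω _; exact swap_comp_self i j ω
        · intro ω _; exact (congrArg F (swap_comp_self i j ω)).symm
      have hgτ : g τ = B / c := by
        simp only [hg]
        rw [expect, ← hFib, hFib_card, hB]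
      have hgτs : g (τ ∘ ⇑(Equiv.swap i j)) = A / c := by
        simp only [hg]
        rw [expect, hswap_sum f, hc _ hτs, hA]
      set P := ∑ ω ∈ Fib, Real.sqrt (f (ω ∘ ⇑(Equiv.swap i j))) * Real.sqrt (f ω) with hP
      have hP0 : 0 ≤ P :=
        Finset.sum_nonneg fun ω _ => mul_nonneg (Real.sqrt_nonneg _) (Real.sqrt_nonneg _)
      have hP2 : P ^ 2 ≤ A * B := by
        have := Finset.sum_mul_sq_le_sq_mul_sq Fib
          (fun ω => Real.sqrt (f (ω ∘ ⇑(Equiv.swap i j)))) (fun ω => Real.sqrt (f ω))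
        simpa [Real.sq_sqrt (hf _)] using this
      have hPle : P ≤ Real.sqrt A * Real.sqrt B := by
        rw [← Real.sqrt_sq hP0, ← Real.sqrt_mul hA0]
        exact Real.sqrt_le_sqrt hP2
      have hexp : ∑ ω ∈ Fib, Y ω = A - 2 * P + B := by
        have hY1 : ∀ ω ∈ Fib, Y ω
            = f (ω ∘ ⇑(Equiv.swap i j))
              - 2 * (Real.sqrt (f (ω ∘ ⇑(Equiv.swap i j))) * Real.sqrt (f ω)) + f ω := by
          intro ω hω
          obtain ⟨h1, h2⟩ := hchimem ω hω
          have hne : ¬ (ω i = ℓ ↔ ω j = ℓ) := by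
            rw [h1, h2]
            intro hiff
            apply hij
            by_cases hτi : τ i = 0
            · rw [hτi, (hiff.mp hτi).symm]
            · rw [Fin.eq_one_of_ne_zero _ hτi,
                Fin.eq_one_of_ne_zero _ (fun hh => hτi (hiff.mpr hh))]
          simp only [hY, if_neg hne, one_mul, grad]
          have e1 : Real.sqrt (f (ω ∘ ⇑(Equiv.swap i j))) ^ 2 = f (ω ∘ ⇑(Equiv.swap i j)) :=
            Real.sq_sqrt (hf _)
          have e2 : Real.sqrt (f ω) ^ 2 = f ω := Real.sq_sqrt (hf _)
          nlinarith [e1, e2]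
        rw [Finset.sum_congr rfl hY1, Finset.sum_add_distrib, Finset.sum_sub_distrib,
          ← Finset.mul_sum, ← hA, ← hB, ← hP]
      have hLHS : (c:ℝ) * X τ = (Real.sqrt A - Real.sqrt B) ^ 2 := by
        have h1 : grad i j (fun τ' => Real.sqrt (g τ')) τ
            = Real.sqrt A / Real.sqrt c - Real.sqrt B / Real.sqrt c := by
          simp only [grad]
          rw [hgτ, hgτs, Real.sqrt_div hA0, Real.sqrt_div hB0]
        have hsc : Real.sqrt c * Real.sqrt c = (c:ℝ) := Real.mul_self_sqrt hcR.le
        have hscne : Real.sqrt (c:ℝ) ≠ 0 := by positivity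
        simp only [hX, h1]
        field_simp
        linear_combination (-(Real.sqrt A - Real.sqrt B) ^ 2) * hsc
      rw [hexp, hLHS]
      nlinarith [Real.sq_sqrt hA0, Real.sq_sqrt hB0, hPle,
        Real.sqrt_nonneg A, Real.sqrt_nonneg B]
  -- sum the fiberwise bound
  have hsum : (c:ℝ) * ∑ τ ∈ Ω₂, X τ ≤ ∑ ω ∈ Ω, Y ω := by
    rw [Finset.mul_sum, ← Finset.sum_fiberwise_of_maps_to (fun ω hω => proj_mem hω ℓ) Y]
    exact Finset.sum_le_sum key
  have hΩ₂ne : Ω₂.Nonempty := ⟨proj ℓ hΩ.choose, proj_mem hΩ.choose_spec ℓ⟩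
  have hD : (0:ℝ) < (Ω₂.card : ℝ) := by exact_mod_cast Finset.card_pos.mpr hΩ₂ne
  have hcard : ((Ω.card : ℝ)) = (Ω₂.card : ℝ) * c := by exact_mod_cast card_slice_eq hc
  show expect Ω₂ X ≤ expect Ω Y
  rw [expect, expect, hcard, div_le_div_iff₀ hD (by positivity)]
  nlinarith [hsum, hD]

end Pair


/-- second conditional-entropy estimate (bound on
`Σ_ℓ (1-κ_ℓ/n) Ent(E[f|ξ_ℓ])`). -/
theorem multislice_second_estimate
    (L : ℕ) (hL : 2 ≤ L) (κ : Fin L → ℕ) (hκ : ∀ ℓ, 0 < κ ℓ)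
    (n : ℕ) (hn : n = ∑ ℓ, κ ℓ)
    (σ : Fin L → ℝ) (hσ0 : ∀ ℓ, 0 ≤ σ ℓ)
    (hσ : ∀ ℓ, ∀ g : (Fin n → Fin 2) → ℝ, (∀ ω, 0 ≤ g ω) →
      entropy (slice 2 n ![κ ℓ, n - κ ℓ]) g ≤
        σ ℓ * dirichlet (slice 2 n ![κ ℓ, n - κ ℓ])
          (fun ω => Real.sqrt (g ω)) (fun ω => Real.sqrt (g ω)))
    (f : (Fin n → Fin L) → ℝ) (hf : ∀ ω, 0 ≤ f ω) :
    ∑ ℓ : Fin L, (1 - (κ ℓ : ℝ) / (n : ℝ)) *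
      entropy (slice L n κ)
        (fun ω => expect ((slice L n κ).filter fun ω' => xi ℓ ω' = xi ℓ ω) f) ≤
      (Finset.univ.sup' ⟨⟨0, by omega⟩, Finset.mem_univ _⟩
          (fun ℓ => 2 * (1 - (κ ℓ : ℝ) / (n : ℝ)) * σ ℓ)) *
        dirichlet (slice L n κ) (fun ω => Real.sqrt (f ω)) (fun ω => Real.sqrt (f ω)) := by
  classical
  set M := (Finset.univ.sup' (⟨⟨0, by omega⟩, Finset.mem_univ _⟩ :
      (Finset.univ : Finset (Fin L)).Nonempty)
      (fun ℓ => 2 * (1 - (κ ℓ : ℝ) / (n : ℝ)) * σ ℓ)) with hM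
  have hΩne : (slice L n κ).Nonempty := slice_nonempty L κ n hn
  have hnpos : 0 < n := by
    have h1 : κ ⟨0, by omega⟩ ≤ n := by
      rw [hn]
      exact Finset.single_le_sum (f := κ) (fun _ _ => Nat.zero_le _) (Finset.mem_univ _)
    have := hκ ⟨0, by omega⟩
    omega
  have hnR : (0:ℝ) < (n:ℝ) := by exact_mod_cast hnpos
  have hκle : ∀ m : Fin L, (κ m : ℝ) / n ≤ 1 := by
    intro m
    rw [div_le_one hnR]
    have : κ m ≤ n := by
      rw [hn]
      exact Finset.single_le_sum (f := κ) (fun _ _ => Nat.zero_le _) (Finset.mem_univ _)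
    exact_mod_cast this
  have ht0 : ∀ m : Fin L, (0:ℝ) ≤ 1 - (κ m : ℝ) / n := fun m => by linarith [hκle m]
  have hMle : ∀ m : Fin L, 2 * (1 - (κ m : ℝ) / n) * σ m ≤ M := by
    intro m
    rw [hM]
    exact Finset.le_sup' (fun ℓ => 2 * (1 - (κ ℓ : ℝ) / (n : ℝ)) * σ ℓ) (Finset.mem_univ m)
  have hM0 : 0 ≤ M := by
    refine le_trans ?_ (hMle ⟨0, by omega⟩)
    have h1 := ht0 ⟨0, by omega⟩
    have h2 := hσ0 ⟨0, by omega⟩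
    positivity
  set Ω := slice L n κ with hΩdef
  have hN : (0:ℝ) < (Ω.card : ℝ) := by exact_mod_cast Finset.card_pos.mpr hΩne
  set pairs := Finset.univ.filter (fun p : Fin n × Fin n => p.1 < p.2) with hpairs
  set Z : Fin n × Fin n → (Fin n → Fin L) → ℝ := fun p ω =>
    grad p.1 p.2 (fun ω' => Real.sqrt (f ω')) ω * grad p.1 p.2 (fun ω' => Real.sqrt (f ω')) ω
    with hZ
  have hZ0 : ∀ p ω, 0 ≤ Z p ω := fun p ω => mul_self_nonneg _
  set Q : Fin L → Fin n × Fin n → ℝ := fun ℓ p =>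
    expect Ω (fun ω => (if (ω p.1 = ℓ ↔ ω p.2 = ℓ) then (0:ℝ) else 1) * Z p ω) with hQ
  -- per-color estimate
  have per : ∀ ℓ : Fin L, (1 - (κ ℓ : ℝ) / n) *
      entropy Ω (fun ω => expect (Ω.filter fun ω' => xi ℓ ω' = xi ℓ ω) f)
      ≤ ((1 - (κ ℓ : ℝ) / n) * σ ℓ) * ((1 / (2 * (n:ℝ))) * ∑ p ∈ pairs, Q ℓ p) := by
    intro ℓ
    obtain ⟨c, hcpos, hc⟩ := exists_fiber_card hΩne ℓ
    set g : (Fin n → Fin 2) → ℝ := fun τ => expect (Ω.filter fun ω' => proj ℓ ω' = τ) f with hg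
    have hfun : (fun ω => expect (Ω.filter fun ω' => xi ℓ ω' = xi ℓ ω) f)
        = fun ω => g (proj ℓ ω) := by
      funext ω
      show expect (Ω.filter fun ω' => xi ℓ ω' = xi ℓ ω) f
          = expect (Ω.filter fun ω' => proj ℓ ω' = proj ℓ ω) f
      congr 1
      apply Finset.filter_congr
      intro ω' _
      exact xi_eq_iff_proj_eq ℓ ω' ω
    have hent : entropy Ω (fun ω => expect (Ω.filter fun ω' => xi ℓ ω' = xi ℓ ω) f)
        = entropy (slice 2 n ![κ ℓ, n - κ ℓ]) g := by
      rw [hfun]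
      exact entropy_proj hΩne hcpos hc g
    have hstep := hσ ℓ g (fun τ => expect_nonneg hf)
    have hdir : dirichlet (slice 2 n ![κ ℓ, n - κ ℓ])
        (fun τ => Real.sqrt (g τ)) (fun τ => Real.sqrt (g τ))
        ≤ (1 / (2 * (n:ℝ))) * ∑ p ∈ pairs, Q ℓ p := by
      unfold dirichlet
      rw [← hpairs]
      apply mul_le_mul_of_nonneg_left _ (by positivity)
      apply Finset.sum_le_sum
      intro p _
      exact pair_bound hΩne hcpos hc f hf p.1 p.2
    calc (1 - (κ ℓ : ℝ) / n) *
        entropy Ω (fun ω => expect (Ω.filter fun ω' => xi ℓ ω' = xi ℓ ω) f)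
        = (1 - (κ ℓ : ℝ) / n) * entropy (slice 2 n ![κ ℓ, n - κ ℓ]) g := by rw [hent]
      _ ≤ (1 - (κ ℓ : ℝ) / n) * (σ ℓ * dirichlet (slice 2 n ![κ ℓ, n - κ ℓ])
            (fun τ => Real.sqrt (g τ)) (fun τ => Real.sqrt (g τ))) :=
          mul_le_mul_of_nonneg_left hstep (ht0 ℓ)
      _ = ((1 - (κ ℓ : ℝ) / n) * σ ℓ) * dirichlet (slice 2 n ![κ ℓ, n - κ ℓ])
            (fun τ => Real.sqrt (g τ)) (fun τ => Real.sqrt (g τ)) := by ring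
      _ ≤ ((1 - (κ ℓ : ℝ) / n) * σ ℓ) * ((1 / (2 * (n:ℝ))) * ∑ p ∈ pairs, Q ℓ p) :=
          mul_le_mul_of_nonneg_left hdir (mul_nonneg (ht0 ℓ) (hσ0 ℓ))
  -- pointwise double-counting bound
  have hpoint : ∀ (i j : Fin n) (ω : Fin n → Fin L),
      (∑ m : Fin L, ((1 - (κ m : ℝ) / n) * σ m) *
        (if (ω i = m ↔ ω j = m) then (0:ℝ) else 1)) ≤ M := by
    intro i j ω
    by_cases hij : ω i = ω j
    · have hz : ∀ m : Fin L, ((1 - (κ m : ℝ) / n) * σ m) *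
          (if (ω i = m ↔ ω j = m) then (0:ℝ) else 1) = 0 := by
        intro m
        rw [if_pos (by rw [hij]), mul_zero]
      rw [Finset.sum_eq_zero fun m _ => hz m]
      exact hM0
    · have hsub : (∑ m : Fin L, ((1 - (κ m : ℝ) / n) * σ m) *
          (if (ω i = m ↔ ω j = m) then (0:ℝ) else 1))
          = ∑ m ∈ ({ω i, ω j} : Finset (Fin L)), ((1 - (κ m : ℝ) / n) * σ m) *
            (if (ω i = m ↔ ω j = m) then (0:ℝ) else 1) := by
        symm
        apply Finset.sum_subset (Finset.subset_univ _)
        intro m _ hm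
        simp only [Finset.mem_insert, Finset.mem_singleton, not_or] at hm
        rw [if_pos, mul_zero]
        constructor
        · intro h; exact absurd h.symm hm.1
        · intro h; exact absurd h.symm hm.2
      rw [hsub, Finset.sum_pair hij]
      have hb : ∀ m : Fin L, ((1 - (κ m : ℝ) / n) * σ m) *
          (if (ω i = m ↔ ω j = m) then (0:ℝ) else 1) ≤ M / 2 := by
        intro m
        have h1 : (0:ℝ) ≤ (1 - (κ m : ℝ) / n) * σ m := mul_nonneg (ht0 m) (hσ0 m)
        have h2 := hMle m
        by_cases hcond : (ω i = m ↔ ω j = m)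
        · rw [if_pos hcond, mul_zero]; linarith
        · rw [if_neg hcond, mul_one]; linarith
      linarith [hb (ω i), hb (ω j)]
  -- per-pair combination
  have perp : ∀ p ∈ pairs, (∑ m : Fin L, ((1 - (κ m : ℝ) / n) * σ m) * Q m p)
      ≤ M * expect Ω (Z p) := by
    intro p _
    have h1 : (∑ m : Fin L, ((1 - (κ m : ℝ) / n) * σ m) * Q m p)
        = (∑ ω ∈ Ω, (∑ m : Fin L, ((1 - (κ m : ℝ) / n) * σ m) *
            (if (ω p.1 = m ↔ ω p.2 = m) then (0:ℝ) else 1)) * Z p ω) / (Ω.card : ℝ) := by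
      calc (∑ m : Fin L, ((1 - (κ m : ℝ) / n) * σ m) * Q m p)
          = ∑ m : Fin L, (∑ ω ∈ Ω, ((1 - (κ m : ℝ) / n) * σ m) *
              ((if (ω p.1 = m ↔ ω p.2 = m) then (0:ℝ) else 1) * Z p ω)) / (Ω.card : ℝ) := by
            refine Finset.sum_congr rfl fun m _ => ?_
            simp only [hQ, expect]
            rw [← mul_div_assoc, Finset.mul_sum]
        _ = (∑ m : Fin L, ∑ ω ∈ Ω, ((1 - (κ m : ℝ) / n) * σ m) *
              ((if (ω p.1 = m ↔ ω p.2 = m) then (0:ℝ) else 1) * Z p ω)) / (Ω.card : ℝ) := by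
            rw [← Finset.sum_div]
        _ = (∑ ω ∈ Ω, ∑ m : Fin L, ((1 - (κ m : ℝ) / n) * σ m) *
              ((if (ω p.1 = m ↔ ω p.2 = m) then (0:ℝ) else 1) * Z p ω)) / (Ω.card : ℝ) := by
            rw [Finset.sum_comm]
        _ = (∑ ω ∈ Ω, (∑ m : Fin L, ((1 - (κ m : ℝ) / n) * σ m) *
            (if (ω p.1 = m ↔ ω p.2 = m) then (0:ℝ) else 1)) * Z p ω) / (Ω.card : ℝ) := by
            congr 1
            refine Finset.sum_congr rfl fun ω _ => ?_
            rw [Finset.sum_mul]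
            refine Finset.sum_congr rfl fun m _ => ?_
            ring
    rw [h1]
    have h2 : (∑ ω ∈ Ω, (∑ m : Fin L, ((1 - (κ m : ℝ) / n) * σ m) *
          (if (ω p.1 = m ↔ ω p.2 = m) then (0:ℝ) else 1)) * Z p ω)
        ≤ ∑ ω ∈ Ω, M * Z p ω := by
      refine Finset.sum_le_sum fun ω _ => ?_
      exact mul_le_mul_of_nonneg_right (hpoint p.1 p.2 ω) (hZ0 p ω)
    calc (∑ ω ∈ Ω, (∑ m : Fin L, ((1 - (κ m : ℝ) / n) * σ m) *
            (if (ω p.1 = m ↔ ω p.2 = m) then (0:ℝ) else 1)) * Z p ω) / (Ω.card : ℝ)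
        ≤ (∑ ω ∈ Ω, M * Z p ω) / (Ω.card : ℝ) := by
          exact (div_le_div_iff_of_pos_right hN).mpr h2
      _ = M * expect Ω (Z p) := by
          rw [← Finset.mul_sum, expect, mul_div_assoc]
  -- final combination
  calc ∑ ℓ : Fin L, (1 - (κ ℓ : ℝ) / n) *
        entropy Ω (fun ω => expect (Ω.filter fun ω' => xi ℓ ω' = xi ℓ ω) f)
      ≤ ∑ ℓ : Fin L, ((1 - (κ ℓ : ℝ) / n) * σ ℓ) * ((1 / (2 * (n:ℝ))) * ∑ p ∈ pairs, Q ℓ p) :=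
        Finset.sum_le_sum fun ℓ _ => per ℓ
    _ = (1 / (2 * (n:ℝ))) * ∑ p ∈ pairs, ∑ m : Fin L, ((1 - (κ m : ℝ) / n) * σ m) * Q m p := by
        have hstep2 : ∀ m : Fin L, ((1 - (κ m : ℝ) / n) * σ m) *
            ((1 / (2 * (n:ℝ))) * ∑ p ∈ pairs, Q m p)
            = ∑ p ∈ pairs, (1 / (2 * (n:ℝ))) * (((1 - (κ m : ℝ) / n) * σ m) * Q m p) := by
          intro m
          rw [Finset.mul_sum, Finset.mul_sum]
          refine Finset.sum_congr rfl fun p _ => ?_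
          ring
        rw [Finset.sum_congr rfl fun m _ => hstep2 m, Finset.sum_comm, Finset.mul_sum]
        refine Finset.sum_congr rfl fun p _ => ?_
        rw [Finset.mul_sum]
    _ ≤ (1 / (2 * (n:ℝ))) * ∑ p ∈ pairs, M * expect Ω (Z p) :=
        mul_le_mul_of_nonneg_left (Finset.sum_le_sum perp) (by positivity)
    _ = M * dirichlet Ω (fun ω => Real.sqrt (f ω)) (fun ω => Real.sqrt (f ω)) := by
        unfold dirichlet
        rw [← hpairs, ← Finset.mul_sum]
        ring

end Multislice
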